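/- Let V be a vector space with nondegenerate symmetric bilinear form f, W' ≤ V a subspace with dim Rad(f|_{W'}) = 1, say Rad(f|_{W'}) = span(r), and let p ∈ V with f(r,p) ≠ 0. Set W = W' + span(p) and suppose r ∉ W'' where W'' ≤ W' is a hyperplane of W' with Rad(f|_{W''}) = 0 and W' = W'' ⊕ span(r). Then the restriction f|_W is nondegenerate. -/
import Mathlib


/-- The radical of the restriction of a bilinear form `f` to a subspace `W`. -/
def bilinRadRestrict {K V : Type*} [Field K] [AddCommGroup V] [Module K V]
    (f : V →ₗ[K] V →ₗ[K] K) (W : Submodule K V) : Submodule K V where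
  carrier := {w | w ∈ W ∧ ∀ w' ∈ W, f w w' = 0}
  add_mem' := by
    rintro a b ⟨ha, ha'⟩ ⟨hb, hb'⟩
    exact ⟨W.add_mem ha hb, fun w hw => by simp [ha' w hw, hb' w hw]⟩
  zero_mem' := ⟨W.zero_mem, fun w hw => by simp⟩
  smul_mem' := by
    rintro c a ⟨ha, ha'⟩
    exact ⟨W.smul_mem c ha, fun w hw => by simp [ha' w hw]⟩

/-- Extending a subspace `W' = W'' ⊕ Kr` (with `f|_{W''}` nondegenerate and `r` in the
radical of `f|_{W'}`) by a vector `p` with `f r p ≠ 0` yields a subspace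
`W = W' + Kp` on which `f` is nondegenerate. -/
theorem rad_restrict_extension_eq_bot
    {K V : Type*} [Field K] [AddCommGroup V] [Module K V]
    (f : V →ₗ[K] V →ₗ[K] K)
    (hsymm : ∀ x y : V, f x y = f y x)
    (hnd : ∀ v : V, (∀ w : V, f v w = 0) → v = 0)
    (W'' W' : Submodule K V) (r p : V)
    (hle : W'' ≤ W')
    (hW''rad : bilinRadRestrict f W'' = ⊥)
    (hrW' : r ∈ W') (hrnot : r ∉ W'')
    (hsum : W' = W'' ⊔ Submodule.span K {r})
    (hrperp : ∀ w ∈ W', f r w = 0)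
    (hp : f r p ≠ 0) :
    bilinRadRestrict f (W' ⊔ Submodule.span K {p}) = ⊥ := by
  rw [Submodule.eq_bot_iff]
  rintro x ⟨hxW, hxperp⟩
  -- decompose x = w' + c • p
  have hpW : p ∈ W' ⊔ Submodule.span K {p} :=
    Submodule.mem_sup_right (Submodule.mem_span_singleton_self p)
  have hrW : r ∈ W' ⊔ Submodule.span K {p} := Submodule.mem_sup_left hrW'
  obtain ⟨w', hw', y, hy, hxy⟩ := Submodule.mem_sup.mp hxW
  obtain ⟨c, rfl⟩ := Submodule.mem_span_singleton.mp hy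
  -- f x r = c * f p r
  have hxr : f x r = 0 := hxperp r hrW
  have h1 : f w' r = 0 := (hsymm w' r) ▸ hrperp w' hw'
  have hc : c = 0 := by
    have : c * f p r = 0 := by
      have := hxr
      rw [← hxy] at this
      simpa [h1] using this
    have hpr : f p r ≠ 0 := fun h => hp (by rw [hsymm r p]; exact h)
    exact (mul_eq_zero.mp this).resolve_right hpr
  subst hc
  simp only [zero_smul, add_zero] at hxy
  subst hxy
  -- now x = w' ∈ W', decompose w' = w'' + a • r
  obtain ⟨w'', hw'', z, hz, hw'z⟩ := Submodule.mem_sup.mp (hsum ▸ hw')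
  obtain ⟨a, rfl⟩ := Submodule.mem_span_singleton.mp hz
  have hw''0 : w'' = 0 := by
    have hmem : w'' ∈ bilinRadRestrict f W'' := by
      refine ⟨hw'', fun u hu => ?_⟩
      have huW' : u ∈ W' := hle hu
      have h2 : f w' u = 0 := hxperp u (Submodule.mem_sup_left huW')
      have h3 : f r u = 0 := hrperp u huW'
      rw [← hw'z] at h2
      simpa [h3] using h2
    rw [hW''rad] at hmem
    exact hmem
  subst hw''0
  simp only [zero_add] at hw'z
  subst hw'z
  -- x = a • r, test against p
  have hxp : f (a • r) p = 0 := hxperp p hpW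
  have ha : a = 0 := by
    have : a * f r p = 0 := by simpa using hxp
    exact (mul_eq_zero.mp this).resolve_right hp
  simp [ha]
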